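/- Four masses m₁, m₂, m₃, m₄ > 0 located at the vertices of a square inscribed in a circle centered at the origin (q_j = e^{i(φ + jπ/2)}) form a central configuration for the potential U_α (α > 0) with center of mass at the origin if and only if m₁ = m₂ = m₃ = m₄. -/

import Mathlib

open Complex Finset

set_option maxHeartbeats 1000000 in
theorem stmt_19 (α : ℝ) (hα : 0 < α) (φ : ℝ) (m : Fin 4 → ℝ) (hm : ∀ j, 0 < m j) :
    let q : Fin 4 → ℂ := fun j =>
      Complex.exp ((φ + ((j : ℕ) + 1) * Real.pi / 2) * Complex.I)
    ((∃ lam : ℝ, ∀ k : Fin 4,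
        ∑ j ∈ Finset.univ.erase k,
          (m j : ℂ) * (q j - q k) / ((‖q j - q k‖ ^ (α + 2) : ℝ) : ℂ)
        = -(↑(lam / α) : ℂ) * q k) ∧
      (∑ j, (m j : ℂ) * q j) = 0)
    ↔ (m 0 = m 1 ∧ m 1 = m 2 ∧ m 2 = m 3) := by
  intro q
  set e : ℂ := Complex.exp (↑φ * I) with he
  have hene : e ≠ 0 := Complex.exp_ne_zero _
  have hIhalf : Complex.exp (↑(Real.pi/2) * I) = I := by
    rw [Complex.exp_mul_I, ← Complex.ofReal_cos, ← Complex.ofReal_sin]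
    simp [Real.cos_pi_div_two, Real.sin_pi_div_two]
  have hq0 : q 0 = e * I := by
    show Complex.exp _ = _
    have h : ((↑φ + (↑(((0:Fin 4)):ℕ) + 1) * ↑Real.pi / 2) * I : ℂ) = ↑φ*I + ↑(Real.pi/2)*I := by
      norm_num; ring
    rw [h, Complex.exp_add, hIhalf]
  have hq1 : q 1 = -e := by
    show Complex.exp _ = _
    have h : ((↑φ + (↑(((1:Fin 4)):ℕ) + 1) * ↑Real.pi / 2) * I : ℂ) = ↑φ*I + ↑Real.pi*I := by
      norm_num; ring
    rw [h, Complex.exp_add, Complex.exp_pi_mul_I]; ring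
  have hq2 : q 2 = -(e * I) := by
    show Complex.exp _ = _
    have h : ((↑φ + (↑(((2:Fin 4)):ℕ) + 1) * ↑Real.pi / 2) * I : ℂ)
        = ↑φ*I + ↑Real.pi*I + ↑(Real.pi/2)*I := by
      norm_num; ring
    rw [h, Complex.exp_add, Complex.exp_add, Complex.exp_pi_mul_I, hIhalf]; ring
  have hq3 : q 3 = e := by
    show Complex.exp _ = _
    have h : ((↑φ + (↑(((3:Fin 4)):ℕ) + 1) * ↑Real.pi / 2) * I : ℂ)
        = ↑φ*I + 2*↑Real.pi*I := by
      simp only [show (((3:Fin 4)):ℕ) = 3 from rfl]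
      push_cast; ring
    rw [h, Complex.exp_add, Complex.exp_two_pi_mul_I]; ring
  have habse : ‖e‖ = 1 := Complex.norm_exp_ofReal_mul_I φ
  have habsC : ∀ a b : ℝ, ‖e * (↑a + ↑b*I)‖ = Real.sqrt (a^2+b^2) := by
    intro a b
    rw [norm_mul, habse, one_mul, Complex.norm_add_mul_I]
  -- the twelve distances
  have ab01 : ‖q 0 - q 1‖ = Real.sqrt 2 := by
    have h : q 0 - q 1 = e * ((1:ℝ) + (1:ℝ)*I) := by rw [hq0, hq1]; push_cast; ring
    rw [h, habsC]; norm_num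
  have ab10 : ‖q 1 - q 0‖ = Real.sqrt 2 := by
    have h : q 1 - q 0 = e * ((-1:ℝ) + (-1:ℝ)*I) := by rw [hq0, hq1]; push_cast; ring
    rw [h, habsC]; norm_num
  have ab02 : ‖q 0 - q 2‖ = 2 := by
    have h : q 0 - q 2 = e * ((0:ℝ) + (2:ℝ)*I) := by rw [hq0, hq2]; push_cast; ring
    rw [h, habsC]
    rw [show (0:ℝ)^2 + (2:ℝ)^2 = 2^2 by norm_num, Real.sqrt_sq (by norm_num)]
  have ab20 : ‖q 2 - q 0‖ = 2 := by
    have h : q 2 - q 0 = e * ((0:ℝ) + (-2:ℝ)*I) := by rw [hq0, hq2]; push_cast; ring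
    rw [h, habsC]
    rw [show (0:ℝ)^2 + (-2:ℝ)^2 = 2^2 by norm_num, Real.sqrt_sq (by norm_num)]
  have ab03 : ‖q 0 - q 3‖ = Real.sqrt 2 := by
    have h : q 0 - q 3 = e * ((-1:ℝ) + (1:ℝ)*I) := by rw [hq0, hq3]; push_cast; ring
    rw [h, habsC]; norm_num
  have ab30 : ‖q 3 - q 0‖ = Real.sqrt 2 := by
    have h : q 3 - q 0 = e * ((1:ℝ) + (-1:ℝ)*I) := by rw [hq0, hq3]; push_cast; ring
    rw [h, habsC]; norm_num
  have ab12 : ‖q 1 - q 2‖ = Real.sqrt 2 := by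
    have h : q 1 - q 2 = e * ((-1:ℝ) + (1:ℝ)*I) := by rw [hq1, hq2]; push_cast; ring
    rw [h, habsC]; norm_num
  have ab21 : ‖q 2 - q 1‖ = Real.sqrt 2 := by
    have h : q 2 - q 1 = e * ((1:ℝ) + (-1:ℝ)*I) := by rw [hq1, hq2]; push_cast; ring
    rw [h, habsC]; norm_num
  have ab13 : ‖q 1 - q 3‖ = 2 := by
    have h : q 1 - q 3 = e * ((-2:ℝ) + (0:ℝ)*I) := by rw [hq1, hq3]; push_cast; ring
    rw [h, habsC]
    rw [show (-2:ℝ)^2 + (0:ℝ)^2 = 2^2 by norm_num, Real.sqrt_sq (by norm_num)]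
  have ab31 : ‖q 3 - q 1‖ = 2 := by
    have h : q 3 - q 1 = e * ((2:ℝ) + (0:ℝ)*I) := by rw [hq1, hq3]; push_cast; ring
    rw [h, habsC]
    rw [show (2:ℝ)^2 + (0:ℝ)^2 = 2^2 by norm_num, Real.sqrt_sq (by norm_num)]
  have ab23 : ‖q 2 - q 3‖ = Real.sqrt 2 := by
    have h : q 2 - q 3 = e * ((-1:ℝ) + (-1:ℝ)*I) := by rw [hq2, hq3]; push_cast; ring
    rw [h, habsC]; norm_num
  have ab32 : ‖q 3 - q 2‖ = Real.sqrt 2 := by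
    have h : q 3 - q 2 = e * ((1:ℝ) + (1:ℝ)*I) := by rw [hq2, hq3]; push_cast; ring
    rw [h, habsC]; norm_num
  -- S and T
  have hS : (0:ℝ) < Real.sqrt 2 ^ (α+2) :=
    Real.rpow_pos_of_pos (Real.sqrt_pos.mpr (by norm_num)) _
  have hT : (0:ℝ) < (2:ℝ) ^ (α+2) := Real.rpow_pos_of_pos (by norm_num) _
  have hSC : ((Real.sqrt 2 ^ (α+2) : ℝ) : ℂ) ≠ 0 := Complex.ofReal_ne_zero.mpr hS.ne'
  have hTC : (((2:ℝ) ^ (α+2) : ℝ) : ℂ) ≠ 0 := Complex.ofReal_ne_zero.mpr hT.ne'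
  have hST : Real.sqrt 2 ^ (α+2) < (2:ℝ) ^ (α+2) := by
    rw [show Real.sqrt 2 = (2:ℝ) ^ ((1:ℝ)/2) from Real.sqrt_eq_rpow 2,
      ← Real.rpow_mul (by norm_num)]
    apply Real.rpow_lt_rpow_left_iff (by norm_num : (1:ℝ) < 2) |>.mpr
    nlinarith
  constructor
  · rintro ⟨⟨lam, hc⟩, -⟩
    have h0 := hc 0
    have h1 := hc 1
    rw [Finset.sum_erase _ (by simp), Fin.sum_univ_four, ab10, ab20, ab30,
      hq0, hq1, hq2, hq3] at h0
    rw [Finset.sum_erase _ (by simp), Fin.sum_univ_four, ab01, ab21, ab31,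
      hq0, hq1, hq2, hq3] at h1
    simp only [sub_self, mul_zero, zero_div, zero_add, map_zero] at h0 h1
    have z0 : (↑(m 1) * (-1 - I) / (↑(Real.sqrt 2 ^ (α+2)):ℂ)
        + ↑(m 2) * (-2*I) / (↑((2:ℝ) ^ (α+2)):ℂ)
        + ↑(m 3) * (1 - I) / (↑(Real.sqrt 2 ^ (α+2)):ℂ) + ↑(lam/α) * I) * e = 0 := by
      linear_combination h0
    have z1 : (↑(m 0) * (1 + I) / (↑(Real.sqrt 2 ^ (α+2)):ℂ)
        + ↑(m 2) * (1 - I) / (↑(Real.sqrt 2 ^ (α+2)):ℂ)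
        + ↑(m 3) * 2 / (↑((2:ℝ) ^ (α+2)):ℂ) - ↑(lam/α)) * e = 0 := by
      linear_combination h1
    have hz0 := (mul_eq_zero.mp z0).resolve_right hene
    have hz1 := (mul_eq_zero.mp z1).resolve_right hene
    field_simp [hSC, hTC] at hz0 hz1
    have r0 := congrArg Complex.re hz0
    have i0 := congrArg Complex.im hz0
    have r1 := congrArg Complex.re hz1
    have i1 := congrArg Complex.im hz1
    simp at r0 i0 r1 i1
    have hAB : (0:ℝ) < Real.sqrt 2 ^ (α+2) * (2:ℝ)^(α+2) := mul_pos hS hT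
    have hm13 : m 1 = m 3 := by
      have h : (m 3 - m 1) * (Real.sqrt 2 ^ (α+2) * (2:ℝ)^(α+2)) = 0 := by
        linear_combination Real.sqrt 2 ^ (α+2) * r0
      have := (mul_eq_zero.mp h).resolve_right hAB.ne'
      linarith
    have hm02 : m 0 = m 2 := by
      have := i1.resolve_left hT.ne'
      linarith
    have key : (m 0 - m 1) * (2 * Real.sqrt 2 ^ (α+2) * ((2:ℝ)^(α+2) - Real.sqrt 2 ^ (α+2))) = 0 := by
      linear_combination Real.sqrt 2 ^ (α+2) * i0 + Real.sqrt 2 ^ (α+2) * r1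
        - (Real.sqrt 2 ^ (α+2) * (2:ℝ)^(α+2) - 2 * (Real.sqrt 2 ^ (α+2))^2) * hm13
        + (Real.sqrt 2 ^ (α+2) * (2:ℝ)^(α+2) - 2 * (Real.sqrt 2 ^ (α+2))^2) * hm02
    have hfac : (0:ℝ) < 2 * Real.sqrt 2 ^ (α+2) * ((2:ℝ)^(α+2) - Real.sqrt 2 ^ (α+2)) :=
      mul_pos (by positivity) (sub_pos.mpr hST)
    have h01 : m 0 = m 1 := by
      have := (mul_eq_zero.mp key).resolve_right hfac.ne'
      linarith
    exact ⟨h01, by linarith, by linarith⟩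
  · rintro ⟨h01, h12, h23⟩
    have h1 : m 1 = m 0 := h01.symm
    have h2 : m 2 = m 0 := (h01.trans h12).symm
    have h3 : m 3 = m 0 := (h01.trans (h12.trans h23)).symm
    have hlam : (α * (2*m 0/(Real.sqrt 2 ^ (α+2)) + 2*m 0/((2:ℝ) ^ (α+2))))/α
        = 2*m 0/(Real.sqrt 2 ^ (α+2)) + 2*m 0/((2:ℝ) ^ (α+2)) :=
      mul_div_cancel_left₀ _ hα.ne'
    refine ⟨⟨α * (2*m 0/(Real.sqrt 2 ^ (α+2)) + 2*m 0/((2:ℝ) ^ (α+2))), ?_⟩, ?_⟩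
    · intro k
      fin_cases k <;>
        simp only [Fin.zero_eta, Fin.mk_one, Fin.reduceFinMk]
      · rw [Finset.sum_erase _ (by simp), Fin.sum_univ_four, ab10, ab20, ab30,
          hq0, hq1, hq2, hq3, h1, h2, h3, hlam]
        push_cast
        ring
      · rw [Finset.sum_erase _ (by simp), Fin.sum_univ_four, ab01, ab21, ab31,
          hq0, hq1, hq2, hq3, h1, h2, h3, hlam]
        push_cast
        ring
      · rw [Finset.sum_erase _ (by simp), Fin.sum_univ_four, ab02, ab12, ab32,
          hq0, hq1, hq2, hq3, h1, h2, h3, hlam]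
        push_cast
        ring
      · rw [Finset.sum_erase _ (by simp), Fin.sum_univ_four, ab03, ab13, ab23,
          hq0, hq1, hq2, hq3, h1, h2, h3, hlam]
        push_cast
        ring
    · rw [Fin.sum_univ_four, hq0, hq1, hq2, hq3, h1, h2, h3]; ring
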